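/- Let f, g be q-linearized polynomials over a field of characteristic p, with q a power of p. If x^q does not divide f and x^{q^t} divides g ∘ f, then x^{q^t} divides g. -/
import Mathlib


open Polynomial

/-- A polynomial is `q`-linearized if every monomial appearing in it has
exponent a power of `q`. -/
def IsLinearized (q : ℕ) {R : Type*} [Semiring R] (f : Polynomial R) : Prop :=
  ∀ i, f.coeff i ≠ 0 → ∃ j, i = q ^ j

/-- For `q`-linearized polynomials `f, g` over a field of characteristic `p`,
with `q` a power of `p`: if `x^q ∤ f` and `x^{q^t} ∣ g ∘ f`, then `x^{q^t} ∣ g`. -/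
theorem x_pow_dvd_of_dvd_comp
    (K : Type*) [Field K] (p : ℕ) [Fact p.Prime] [CharP K p]
    (q e t : ℕ) (he : 1 ≤ e) (hq : q = p ^ e)
    (f g : Polynomial K) (hf : IsLinearized q f) (hg : IsLinearized q g)
    (hxf : ¬ X ^ q ∣ f) (hdvd : X ^ q ^ t ∣ g.comp f) :
    X ^ q ^ t ∣ g := by
  rcases eq_or_ne g 0 with rfl | hg0
  · simp
  have hp1 : 1 < p := (Fact.out : p.Prime).one_lt
  have hq2 : 1 < q := by
    rw [hq]; exact Nat.one_lt_pow (by omega) hp1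
  have hf0 : f.coeff 0 = 0 := by
    by_contra hcon
    obtain ⟨j, hj⟩ := hf 0 hcon
    have := Nat.one_le_pow j q (by omega)
    omega
  have hf1 : f.coeff 1 ≠ 0 := by
    intro h1
    apply hxf
    rw [X_pow_dvd_iff]
    intro d hd
    by_contra hc
    obtain ⟨j, rfl⟩ := hf d hc
    have hj0 : j = 0 := by
      by_contra hj
      have : q ≤ q ^ j := Nat.le_self_pow hj q
      omega
    subst hj0
    exact hc (by simpa using h1)
  obtain ⟨h, hfh⟩ : X ∣ f := X_dvd_iff.mpr hf0
  have hh0 : h.coeff 0 = f.coeff 1 := by rw [hfh, coeff_X_mul]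
  obtain ⟨i0, hi0m⟩ := Polynomial.support_nonempty.mpr hg0
  have hi0 : g.coeff i0 ≠ 0 := mem_support_iff.mp hi0m
  have hex : ∃ j, g.coeff (q ^ j) ≠ 0 := by
    obtain ⟨j0, rfl⟩ := hg i0 hi0
    exact ⟨j0, hi0⟩
  classical
  set s := Nat.find hex with hs
  have hgs : g.coeff (q ^ s) ≠ 0 := Nat.find_spec hex
  have hmin : ∀ j < s, g.coeff (q ^ j) = 0 := fun j hj => by
    have := Nat.find_min hex hj
    simpa using this
  have hcomp : (g.comp f).coeff (q ^ s) = g.coeff (q ^ s) * (f.coeff 1) ^ (q ^ s) := by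
    rw [comp_eq_sum_left, coeff_sum, Polynomial.sum_def]
    rw [Finset.sum_eq_single (q ^ s)]
    · rw [coeff_C_mul, ← hh0, hfh, mul_pow]
      congr 1
      have h2 : (X ^ (q ^ s) * h ^ (q ^ s)).coeff (0 + q ^ s) = (h ^ (q ^ s)).coeff 0 :=
        coeff_X_pow_mul _ _ _
      rw [zero_add] at h2
      rw [h2, coeff_zero_eq_eval_zero, eval_pow, ← coeff_zero_eq_eval_zero]
    · intro i hi hne
      obtain ⟨j, rfl⟩ := hg i (mem_support_iff.mp hi)
      rcases lt_or_gt_of_ne hne with hlt | hgt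
      · have hjs : j < s := by
          by_contra hjs
          have : q ^ s ≤ q ^ j := Nat.pow_le_pow_right (by omega) (by omega)
          omega
        exact absurd (hmin j hjs) (mem_support_iff.mp hi)
      · rw [coeff_C_mul]
        have hz : (f ^ (q ^ j)).coeff (q ^ s) = 0 := by
          have hdvd' : X ^ (q ^ j) ∣ f ^ (q ^ j) := pow_dvd_pow_of_dvd ⟨h, hfh⟩ _
          exact (X_pow_dvd_iff.mp hdvd') _ hgt
        rw [hz, mul_zero]
    · intro hns
      rw [notMem_support_iff.mp hns]
      simp
  have hne : (g.comp f).coeff (q ^ s) ≠ 0 := by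
    rw [hcomp]; exact mul_ne_zero hgs (pow_ne_zero _ hf1)
  have hts : q ^ t ≤ q ^ s := by
    by_contra hlt
    exact hne ((X_pow_dvd_iff.mp hdvd) _ (by omega))
  have hts' : t ≤ s := (Nat.pow_le_pow_iff_right hq2).mp hts
  rw [X_pow_dvd_iff]
  intro d hd
  by_contra hc
  obtain ⟨j, rfl⟩ := hg d hc
  have hjt : j < t := by
    by_contra hjt
    have : q ^ t ≤ q ^ j := Nat.pow_le_pow_right (by omega) (by omega)
    omega
  exact hc (hmin j (lt_of_lt_of_le hjt hts'))
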